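/- With notation as in the FWL theorem, the second block of the full OLS coefficient also satisfies β̂2 = (X̃2'X̃2)^{-1}X̃2'Y, i.e., regressing the raw outcome Y on the residualized regressors X̃2 gives the same coefficient as the full regression. -/

import Mathlib

open Matrix

theorem stmt_5 {n K L : ℕ}
    (X1 : Matrix (Fin n) (Fin K) ℝ) (X2 : Matrix (Fin n) (Fin L) ℝ) (Y : Fin n → ℝ)
    (X : Matrix (Fin n) (Fin K ⊕ Fin L) ℝ) (hX : X = Matrix.fromCols X1 X2)
    (H1 : Matrix (Fin n) (Fin n) ℝ) (hH1 : H1 = X1 * (X1ᵀ * X1)⁻¹ * X1ᵀ)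
    (X2t : Matrix (Fin n) (Fin L) ℝ) (hX2t : X2t = (1 - H1) * X2)
    (betaHat : (Fin K ⊕ Fin L) → ℝ) (hbetaHat : betaHat = (Xᵀ * X)⁻¹ *ᵥ (Xᵀ *ᵥ Y))
    (hGX : IsUnit (Xᵀ * X)) (hG1 : IsUnit (X1ᵀ * X1)) (hG2 : IsUnit (X2tᵀ * X2t)) :
    (fun l => betaHat (Sum.inr l)) = (X2tᵀ * X2t)⁻¹ *ᵥ (X2tᵀ *ᵥ Y) := by
  have hdX : IsUnit (Xᵀ * X).det := (Matrix.isUnit_iff_isUnit_det _).mp hGX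
  have hd1 : IsUnit (X1ᵀ * X1).det := (Matrix.isUnit_iff_isUnit_det _).mp hG1
  have hd2 : IsUnit (X2tᵀ * X2t).det := (Matrix.isUnit_iff_isUnit_det _).mp hG2
  set β1 : Fin K → ℝ := fun k => betaHat (Sum.inl k) with hβ1
  set β2 : Fin L → ℝ := fun l => betaHat (Sum.inr l) with hβ2
  -- normal equations
  have hnorm : (Xᵀ * X) *ᵥ betaHat = Xᵀ *ᵥ Y := by
    rw [hbetaHat, mulVec_mulVec, Matrix.mul_nonsing_inv _ hdX, one_mulVec]
  rw [hX, transpose_fromCols, fromRows_mul_fromCols, fromBlocks_mulVec,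
    fromRows_mulVec] at hnorm
  have E1 : (X1ᵀ * X1) *ᵥ β1 + (X1ᵀ * X2) *ᵥ β2 = X1ᵀ *ᵥ Y := by
    funext k; exact congrFun hnorm (Sum.inl k)
  have E2 : (X2ᵀ * X1) *ᵥ β1 + (X2ᵀ * X2) *ᵥ β2 = X2ᵀ *ᵥ Y := by
    funext l; exact congrFun hnorm (Sum.inr l)
  -- structure of X2t
  have hG1inv : (X1ᵀ * X1)⁻¹ * (X1ᵀ * X1) = 1 := Matrix.nonsing_inv_mul _ hd1
  have hG1sym : ((X1ᵀ * X1)⁻¹)ᵀ = (X1ᵀ * X1)⁻¹ := by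
    rw [Matrix.transpose_nonsing_inv, Matrix.transpose_mul, Matrix.transpose_transpose]
  have hH1sym : H1ᵀ = H1 := by
    rw [hH1, Matrix.transpose_mul, Matrix.transpose_mul, Matrix.transpose_transpose, hG1sym,
      Matrix.mul_assoc]
  have hH1idem : H1 * H1 = H1 := by
    rw [hH1]
    simp only [Matrix.mul_assoc]
    rw [← Matrix.mul_assoc X1ᵀ X1, Matrix.mul_nonsing_inv_cancel_left _ _ hd1]
  have hM : (1 - H1)ᵀ * (1 - H1) = 1 - H1 := by
    rw [Matrix.transpose_sub, Matrix.transpose_one, hH1sym, Matrix.sub_mul, Matrix.mul_sub,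
      Matrix.mul_sub, hH1idem, Matrix.one_mul, Matrix.one_mul, Matrix.mul_one]
    abel
  have hXX : X2tᵀ * X2t = X2ᵀ * ((1 - H1) * X2) := by
    rw [hX2t, Matrix.transpose_mul, Matrix.mul_assoc, ← Matrix.mul_assoc (1 - H1)ᵀ, hM,
      ← Matrix.mul_assoc]
  have hXY : X2tᵀ *ᵥ Y = X2ᵀ *ᵥ ((1 - H1) *ᵥ Y) := by
    rw [hX2t, Matrix.transpose_mul, Matrix.transpose_sub, Matrix.transpose_one, hH1sym,
      ← Matrix.mulVec_mulVec]
  -- the key equation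
  have key : (X2tᵀ * X2t) *ᵥ β2 = X2tᵀ *ᵥ Y := by
    rw [hXX, hXY]
    have e1 : (X1ᵀ * X2) *ᵥ β2 = X1ᵀ *ᵥ Y - (X1ᵀ * X1) *ᵥ β1 := by
      rw [← E1]; abel
    have hβ1' : (X1ᵀ * X1)⁻¹ *ᵥ ((X1ᵀ * X1) *ᵥ β1) = β1 := by
      rw [Matrix.mulVec_mulVec, hG1inv, one_mulVec]
    have expand : (X2ᵀ * ((1 - H1) * X2)) *ᵥ β2
        = (X2ᵀ * X2) *ᵥ β2 - (X2ᵀ * X1) *ᵥ ((X1ᵀ * X1)⁻¹ *ᵥ ((X1ᵀ * X2) *ᵥ β2)) := by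
      rw [Matrix.mulVec_mulVec, Matrix.mulVec_mulVec, Matrix.sub_mul, Matrix.one_mul,
        Matrix.mul_sub, Matrix.sub_mulVec]
      congr 2
      rw [hH1]
      simp only [Matrix.mul_assoc]
    rw [expand, e1, Matrix.mulVec_sub, hβ1', Matrix.mulVec_sub]
    have e2 : (X2ᵀ * X2) *ᵥ β2 = X2ᵀ *ᵥ Y - (X2ᵀ * X1) *ᵥ β1 := by
      rw [← E2]; abel
    have rhs : X2ᵀ *ᵥ ((1 - H1) *ᵥ Y)
        = X2ᵀ *ᵥ Y - (X2ᵀ * X1) *ᵥ ((X1ᵀ * X1)⁻¹ *ᵥ (X1ᵀ *ᵥ Y)) := by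
      rw [Matrix.mulVec_mulVec, Matrix.mulVec_mulVec, Matrix.mulVec_mulVec,
        Matrix.mul_sub, Matrix.mul_one, Matrix.sub_mulVec]
      congr 2
      rw [hH1]
      simp only [Matrix.mul_assoc]
    rw [rhs, e2]
    abel
  have : β2 = (X2tᵀ * X2t)⁻¹ *ᵥ (X2tᵀ *ᵥ Y) := by
    rw [← key, Matrix.mulVec_mulVec, Matrix.nonsing_inv_mul _ hd2, one_mulVec]
  exact this
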